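/- Let R be a commutative ring that is a ℚ-algebra, D : R → R a derivation, and N ⊆ R an ideal such that N^s = 0 for some s ≥ 1 and D(N^j) ⊆ N^{j+1} for every j ≥ 1. For x ∈ R define g_n(x) recursively by g_0(x) = 1 and g_{n+1}(x) = x·g_n(x) + D(g_n(x)), and for a ∈ N set E(a) = Σ_{n=0}^{s−1} g_n(a)/n!. Then for all a, b ∈ N: (i) g_n(a) ∈ N^n for every n ≥ 0 (in particular g_n(a) = 0 for n ≥ s); (ii) E(a + b) = E(a)·E(b); (iii) E(a) is a unit of R and E(a) ≡ 1 modulo N. -/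

import Mathlib

private lemma gbinom {R : Type*} [CommRing R] (D : R → R)
    (hDadd : ∀ x y, D (x + y) = D x + D y)
    (hDmul : ∀ x y, D (x * y) = x * D y + D x * y)
    (g : ℕ → R → R) (hg0 : ∀ x, g 0 x = 1)
    (hgs : ∀ n x, g (n + 1) x = x * g n x + D (g n x))
    (a b : R) : ∀ n : ℕ, g n (a + b)
      = ∑ k ∈ Finset.range (n + 1), (n.choose k) • (g k a * g (n - k) b) := by
  have Dsum : ∀ (t : Finset ℕ) (f : ℕ → R),
      D (∑ i ∈ t, f i) = ∑ i ∈ t, D (f i) := fun t f =>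
    map_sum (AddMonoidHom.mk' D hDadd) f t
  have Dnsmul : ∀ (c : ℕ) (x : R), D (c • x) = c • D x := fun c x =>
    map_nsmul (AddMonoidHom.mk' D hDadd) c x
  intro n
  induction n with
  | zero => simp [hg0]
  | succ n ih =>
    rw [hgs, ih, Dsum]
    have step : ∀ k ∈ Finset.range (n + 1),
        D ((n.choose k) • (g k a * g (n - k) b))
          = (n.choose k) • (g k a * D (g (n - k) b))
            + (n.choose k) • (D (g k a) * g (n - k) b) := by
      intro k _
      rw [Dnsmul, hDmul, smul_add]
    rw [Finset.sum_congr rfl step, Finset.sum_add_distrib, add_mul, Finset.mul_sum,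
      Finset.mul_sum]
    have e1 : (∑ k ∈ Finset.range (n + 1), a * ((n.choose k) • (g k a * g (n - k) b)))
        + ∑ k ∈ Finset.range (n + 1), (n.choose k) • (D (g k a) * g (n - k) b)
        = ∑ k ∈ Finset.range (n + 1), (n.choose k) • (g (k + 1) a * g (n - k) b) := by
      rw [← Finset.sum_add_distrib]
      refine Finset.sum_congr rfl fun k _ => ?_
      have h : a * (g k a * g (n - k) b) + D (g k a) * g (n - k) b
          = g (k + 1) a * g (n - k) b := by rw [hgs]; ring
      rw [mul_smul_comm, ← smul_add, h]
    have e2 : (∑ k ∈ Finset.range (n + 1), b * ((n.choose k) • (g k a * g (n - k) b)))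
        + ∑ k ∈ Finset.range (n + 1), (n.choose k) • (g k a * D (g (n - k) b))
        = ∑ k ∈ Finset.range (n + 1), (n.choose k) • (g k a * g ((n - k) + 1) b) := by
      rw [← Finset.sum_add_distrib]
      refine Finset.sum_congr rfl fun k _ => ?_
      have h : b * (g k a * g (n - k) b) + g k a * D (g (n - k) b)
          = g k a * g ((n - k) + 1) b := by rw [hgs]; ring
      rw [mul_smul_comm, ← smul_add, h]
    have hrearr :
        (∑ k ∈ Finset.range (n + 1), a * ((n.choose k) • (g k a * g (n - k) b)))
        + (∑ k ∈ Finset.range (n + 1), b * ((n.choose k) • (g k a * g (n - k) b)))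
        + ((∑ k ∈ Finset.range (n + 1), (n.choose k) • (g k a * D (g (n - k) b)))
          + ∑ k ∈ Finset.range (n + 1), (n.choose k) • (D (g k a) * g (n - k) b))
        = (∑ k ∈ Finset.range (n + 1), (n.choose k) • (g (k + 1) a * g (n - k) b))
          + ∑ k ∈ Finset.range (n + 1), (n.choose k) • (g k a * g ((n - k) + 1) b) := by
      rw [← e1, ← e2]; ring
    rw [hrearr]
    -- now prove S1 + S2 = RHS
    rw [Finset.sum_range_succ' (fun k => ((n + 1).choose k) • (g k a * g (n + 1 - k) b))
      (n + 1)]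
    have hA : ∀ k ∈ Finset.range (n + 1),
        ((n + 1).choose (k + 1)) • (g (k + 1) a * g (n + 1 - (k + 1)) b)
          = (n.choose k) • (g (k + 1) a * g (n - k) b)
            + (n.choose (k + 1)) • (g (k + 1) a * g (n - k) b) := by
      intro k _
      rw [Nat.succ_sub_succ, Nat.choose_succ_succ, add_smul]
    rw [Finset.sum_congr rfl hA, Finset.sum_add_distrib]
    have hB : ∑ k ∈ Finset.range (n + 1), (n.choose (k + 1)) • (g (k + 1) a * g (n - k) b)
        = ∑ k ∈ Finset.range n, (n.choose (k + 1)) • (g (k + 1) a * g (n - k) b) := by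
      rw [Finset.sum_range_succ, Nat.choose_succ_self, zero_smul, add_zero]
    have hC : ∑ k ∈ Finset.range (n + 1), (n.choose k) • (g k a * g ((n - k) + 1) b)
        = (∑ k ∈ Finset.range n, (n.choose (k + 1)) • (g (k + 1) a * g (n - k) b))
          + ((n + 1).choose 0) • (g 0 a * g (n + 1 - 0) b) := by
      rw [Finset.sum_range_succ' (fun k => (n.choose k) • (g k a * g ((n - k) + 1) b)) n]
      congr 1
      · refine Finset.sum_congr rfl fun k hk => ?_
        have hk' : k < n := Finset.mem_range.mp hk
        have e : n - (k + 1) + 1 = n - k := by omega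
        rw [e]
      · simp
    rw [hB, hC]
    ring

theorem stmt3 (R : Type*) [CommRing R] [Algebra ℚ R] (D : R → R)
    (hDadd : ∀ x y, D (x + y) = D x + D y)
    (hDmul : ∀ x y, D (x * y) = x * D y + D x * y)
    (N : Ideal R) (s : ℕ) (hs : 1 ≤ s) (hNs : N ^ s = ⊥)
    (hDN : ∀ j : ℕ, 1 ≤ j → ∀ x ∈ N ^ j, D x ∈ N ^ (j + 1))
    (g : ℕ → R → R)
    (hg0 : ∀ x, g 0 x = 1)
    (hgs : ∀ n x, g (n + 1) x = x * g n x + D (g n x))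
    (E : R → R)
    (hE : ∀ a, E a = ∑ n ∈ Finset.range s, ((n.factorial : ℚ)⁻¹) • g n a) :
    ∀ a ∈ N, ∀ b ∈ N,
      (∀ n : ℕ, g n a ∈ N ^ n) ∧
      E (a + b) = E a * E b ∧
      IsUnit (E a) ∧ E a - 1 ∈ N := by
  have hD0 : D 0 = 0 := by
    have h := hDadd 0 0
    rw [add_zero] at h
    have h2 : D 0 + D 0 = D 0 + 0 := by rw [add_zero]; exact h.symm
    exact add_left_cancel h2
  have hD1 : D 1 = 0 := by
    have h := hDmul 1 1
    rw [mul_one, one_mul, mul_one] at h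
    have h2 : D 1 + D 1 = D 1 + 0 := by rw [add_zero]; exact h.symm
    exact add_left_cancel h2
  -- (i) g n a ∈ N ^ n
  have hgN : ∀ a ∈ N, ∀ n : ℕ, g n a ∈ N ^ n := by
    intro a ha n
    induction n with
    | zero => simp [hg0, Ideal.one_eq_top]
    | succ n ih =>
      rw [hgs]
      refine Ideal.add_mem _ ?_ ?_
      · have h := Ideal.mul_mem_mul ha ih
        rwa [← pow_succ'] at h
      · cases n with
        | zero => rw [hg0, hD1]; exact Ideal.zero_mem _
        | succ m => exact hDN (m + 1) (by omega) _ ih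
  have hgz : ∀ a ∈ N, ∀ n : ℕ, s ≤ n → g n a = 0 := by
    intro a ha n hn
    have h1 : g n a ∈ N ^ s := Ideal.pow_le_pow_right hn (hgN a ha n)
    rw [hNs] at h1
    exact (Submodule.mem_bot R).mp h1
  have hprodzero : ∀ a ∈ N, ∀ b ∈ N, ∀ i j : ℕ, s ≤ i + j → g i a * g j b = 0 := by
    intro a ha b hb i j hij
    have h1 : g i a * g j b ∈ N ^ i * N ^ j := Ideal.mul_mem_mul (hgN a ha i) (hgN b hb j)
    rw [← pow_add] at h1
    have h2 : N ^ (i + j) ≤ N ^ s := Ideal.pow_le_pow_right hij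
    rw [hNs] at h2
    exact (Submodule.mem_bot R).mp (h2 h1)
  -- multiplicativity
  have hmul : ∀ a ∈ N, ∀ b ∈ N, E (a + b) = E a * E b := by
    intro a ha b hb
    set f : ℕ → ℕ → R :=
      fun i j => ((i.factorial : ℚ)⁻¹ * (j.factorial : ℚ)⁻¹) • (g i a * g j b) with hf
    have hlhs : E (a + b) = ∑ m ∈ Finset.range s, ∑ k ∈ Finset.range (s - m), f m k := by
      rw [hE]
      rw [← Finset.sum_range_diag_flip s (fun i j => f i j)]
      refine Finset.sum_congr rfl fun n _ => ?_
      rw [gbinom D hDadd hDmul g hg0 hgs a b n, Finset.smul_sum]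
      refine Finset.sum_congr rfl fun k hk => ?_
      have hkn : k ≤ n := Nat.lt_succ_iff.mp (Finset.mem_range.mp hk)
      rw [hf]
      rw [← Nat.cast_smul_eq_nsmul ℚ (n.choose k) (g k a * g (n - k) b), smul_smul]
      congr 1
      have hfac : (n.choose k : ℚ) * (k.factorial : ℚ) * ((n - k).factorial : ℚ)
          = (n.factorial : ℚ) := by
        exact_mod_cast congrArg (Nat.cast : ℕ → ℚ)
          (Nat.choose_mul_factorial_mul_factorial hkn)
      have hk0 : (k.factorial : ℚ) ≠ 0 := Nat.cast_ne_zero.mpr k.factorial_ne_zero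
      have hnk0 : ((n - k).factorial : ℚ) ≠ 0 := Nat.cast_ne_zero.mpr (n - k).factorial_ne_zero
      have hn0 : (n.factorial : ℚ) ≠ 0 := Nat.cast_ne_zero.mpr n.factorial_ne_zero
      field_simp
      linear_combination hfac
    have hrhs : E a * E b = ∑ i ∈ Finset.range s, ∑ j ∈ Finset.range s, f i j := by
      rw [hE, hE, Finset.sum_mul_sum]
      refine Finset.sum_congr rfl fun i _ => Finset.sum_congr rfl fun j _ => ?_
      simp only [hf]
      rw [smul_mul_smul_comm]
    rw [hlhs, hrhs]
    refine Finset.sum_congr rfl fun i hi => ?_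
    refine Finset.sum_subset ?_ ?_
    · intro j hj
      exact Finset.mem_range.mpr (lt_of_lt_of_le (Finset.mem_range.mp hj) (Nat.sub_le s i))
    · intro j _ hj
      have hij : s ≤ i + j := by
        have := Finset.mem_range.not.mp hj
        omega
      rw [hf]
      simp only []
      rw [hprodzero a ha b hb i j hij, smul_zero]
  -- E 0 = 1
  have hg0z : ∀ n : ℕ, 1 ≤ n → g n (0 : R) = 0 := by
    intro n hn
    induction n with
    | zero => omega
    | succ m ih =>
      rw [hgs]
      cases Nat.eq_zero_or_pos m with
      | inl h => subst h; rw [hg0, hD1, zero_mul, add_zero]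
      | inr h => rw [ih h, hD0, zero_mul, add_zero]
  have hE0 : E (0 : R) = 1 := by
    rw [hE]
    rw [Finset.sum_eq_single 0]
    · simp [hg0]
    · intro n _ hn
      rw [hg0z n (by omega), smul_zero]
    · intro h
      exact absurd (Finset.mem_range.mpr (by omega)) h
  intro a ha b hb
  refine ⟨hgN a ha, hmul a ha b hb, ?_, ?_⟩
  · refine IsUnit.of_mul_eq_one (a := E a) (E (-a)) ?_
    rw [← hmul a ha (-a) (N.neg_mem ha), add_neg_cancel, hE0]
  · obtain ⟨t, rfl⟩ : ∃ t, s = t + 1 := ⟨s - 1, by omega⟩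
    rw [hE, Finset.sum_range_succ' (fun n => ((n.factorial : ℚ)⁻¹) • g n a) t]
    have h0 : ((Nat.factorial 0 : ℚ)⁻¹) • g 0 a = 1 := by simp [hg0]
    rw [h0, add_sub_cancel_right]
    refine Ideal.sum_mem _ fun k _ => ?_
    rw [Algebra.smul_def]
    refine Ideal.mul_mem_left _ _ ?_
    have h1 : g (k + 1) a ∈ N ^ (k + 1) := hgN a ha (k + 1)
    exact Ideal.pow_le_self (Nat.succ_ne_zero k) h1
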